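/- arXiv:2210.02555 — 3 statements merged into one kernel-verified Lean document; each statement's English description precedes it below -/
import Mathlib

section
/- The BH threshold τ_BH = α R_BH / m, with R_BH = max{0 ≤ k ≤ m : P_(k) ≤ αk/m}, satisfies τ_BH = sup{t ≥ 0 : F(t) ≥ t/α}, where F is the empirical pseudo-CDF and the sup of the empty set is taken as 0. Moreover F(τ_BH) = τ_BH/α when R_BH ≥ 1. -/
lemma bh_count_perm (m : ℕ) (P : Fin m → ℝ) (σ : Equiv.Perm (Fin m)) (t : ℝ) :
    (Finset.univ.filter (fun i => P i ≤ t)).card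
      = (Finset.univ.filter (fun j => P (σ j) ≤ t)).card := by
  exact Finset.card_bij' (fun i _ => σ.symm i) (fun j _ => σ j)
    (by intro a ha; simp at ha ⊢; simpa using ha)
    (by intro a ha; simp at ha ⊢; exact ha)
    (by intro a _; simp) (by intro a _; simp)

lemma bh_card_lt (m k : ℕ) (hk : k ≤ m) :
    (Finset.univ.filter (fun j : Fin m => (j : ℕ) < k)).card = k := by
  have h : (Finset.univ.filter (fun j : Fin m => (j : ℕ) < k))
      = Finset.map (Fin.castLEEmb hk) Finset.univ := by
    ext j
    simp only [Finset.mem_filter, Finset.mem_univ, true_and, Finset.mem_map,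
      Fin.castLEEmb_apply]
    constructor
    · intro h; exact ⟨⟨j, h⟩, rfl⟩
    · rintro ⟨i, rfl⟩; exact i.2
  rw [h]; simp

/-- The BH threshold `τ_BH = α R_BH / m` with `R_BH = max{0 ≤ k ≤ m : P_(k) ≤ αk/m}`
satisfies `τ_BH = sup{t ≥ 0 : F t ≥ t/α}` (sup of the empty set taken as 0), where `F`
is the empirical pseudo-CDF; moreover `F(τ_BH) = τ_BH/α` when `R_BH ≥ 1`. -/
theorem bh_threshold_sup (m : ℕ) (hm : 1 ≤ m) (α : ℝ) (hα : α ∈ Set.Ioo (0 : ℝ) 1)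
    (P : Fin m → ℝ) (hrange : ∀ i, P i ∈ Set.Ioc (0 : ℝ) 1)
    (hinj : Function.Injective P)
    (σ : Equiv.Perm (Fin m)) (hσ : StrictMono (P ∘ σ))
    (Q : ℕ → ℝ) (hQ0 : Q 0 = 0) (hQ : ∀ k : Fin m, Q ((k : ℕ) + 1) = P (σ k))
    (R : ℕ) (hR : R = sSup {k : ℕ | k ≤ m ∧ Q k ≤ α * k / m}) :
    α * R / m = sSup {t : ℝ | 0 ≤ t ∧
        ((Finset.univ.filter (fun i => P i ≤ t)).card : ℝ) / m ≥ t / α}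
    ∧ (1 ≤ R →
        ((Finset.univ.filter (fun i => P i ≤ α * R / m)).card : ℝ) / m
          = (α * R / m) / α) := by
  obtain ⟨hα0, hα1⟩ := hα
  have hm0 : (0 : ℝ) < m := by exact_mod_cast hm
  -- facts about R
  set S : Set ℕ := {k : ℕ | k ≤ m ∧ Q k ≤ α * k / m} with hS
  have h0S : 0 ∈ S := ⟨Nat.zero_le m, by simp [hQ0]⟩
  have hbdd : BddAbove S := ⟨m, fun k hk => hk.1⟩
  have hRS : R ∈ S := by rw [hR]; exact Nat.sSup_mem ⟨0, h0S⟩ hbdd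
  have hRmax : ∀ k, k ∈ S → k ≤ R := by
    intro k hk; rw [hR]; exact le_csSup hbdd hk
  have hRm : R ≤ m := hRS.1
  have hQR : Q R ≤ α * R / m := hRS.2
  -- key1 : elements below the count are ≤ t
  have key1 : ∀ (t : ℝ) (j : Fin m),
      (j : ℕ) < (Finset.univ.filter (fun i => P i ≤ t)).card → P (σ j) ≤ t := by
    intro t j hj
    rw [bh_count_perm m P σ t] at hj
    by_contra hc
    have hsub : (Finset.univ.filter (fun a : Fin m => P (σ a) ≤ t)) ⊆ Finset.Iio j := by
      intro a ha
      simp only [Finset.mem_filter, Finset.mem_univ, true_and] at ha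
      simp only [Finset.mem_Iio]
      by_contra hlt
      push_neg at hlt
      exact hc (le_trans (hσ.monotone hlt) ha)
    have hcard := Finset.card_le_card hsub
    have : (Finset.Iio j).card = (j : ℕ) := by simp
    omega
  -- key2 : if all indices below k are ≤ t then count ≥ k
  have key2 : ∀ (t : ℝ) (k : ℕ), k ≤ m →
      (∀ j : Fin m, (j : ℕ) < k → P (σ j) ≤ t) →
      k ≤ (Finset.univ.filter (fun i => P i ≤ t)).card := by
    intro t k hk h
    rw [bh_count_perm m P σ t]
    calc k = (Finset.univ.filter (fun j : Fin m => (j : ℕ) < k)).card :=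
          (bh_card_lt m k hk).symm
      _ ≤ _ := Finset.card_le_card (by
          intro j hj
          simp only [Finset.mem_filter, Finset.mem_univ, true_and] at hj ⊢
          exact h j hj)
  set τ : ℝ := α * R / m with hτ
  have hτ0 : 0 ≤ τ := by positivity
  have hτα : τ / α = (R : ℝ) / m := by
    rw [hτ]; field_simp
  -- count at τ is at least R
  have hQj : ∀ j : Fin m, (j : ℕ) < R → P (σ j) ≤ τ := by
    intro j hj
    have hRm' : R - 1 < m := by omega
    have h2 := hQ ⟨R - 1, hRm'⟩
    simp only [Fin.val_mk] at h2
    rw [show R - 1 + 1 = R from by omega] at h2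
    calc P (σ j) ≤ P (σ ⟨R - 1, hRm'⟩) := hσ.monotone (by
          simp only [Fin.le_def, Fin.val_mk]; omega)
      _ = Q R := h2.symm
      _ ≤ τ := hQR
  have hcτ : R ≤ (Finset.univ.filter (fun i => P i ≤ τ)).card := key2 τ R hRm hQj
  -- τ is in the set T
  have hτT : τ ∈ {t : ℝ | 0 ≤ t ∧
      ((Finset.univ.filter (fun i => P i ≤ t)).card : ℝ) / m ≥ t / α} := by
    refine ⟨hτ0, ?_⟩
    rw [ge_iff_le, hτα]
    gcongr
  -- every element of T is ≤ τ
  have hub : ∀ t ∈ {t : ℝ | 0 ≤ t ∧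
      ((Finset.univ.filter (fun i => P i ≤ t)).card : ℝ) / m ≥ t / α}, t ≤ τ := by
    rintro t ⟨ht0, hF⟩
    set k := (Finset.univ.filter (fun i => P i ≤ t)).card with hk
    have hkm : k ≤ m := le_trans (Finset.card_filter_le _ _) (by simp)
    have htk : t ≤ α * k / m := by
      have h1 : t / α ≤ (k : ℝ) / m := hF
      calc t = (t / α) * α := by field_simp
        _ ≤ ((k : ℝ) / m) * α := by gcongr
        _ = α * k / m := by ring
    rcases Nat.eq_zero_or_pos k with hk0 | hk1
    · rw [hk0] at htk; simp at htk; linarith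
    · have hkm' : k - 1 < m := by omega
      have hPk : P (σ ⟨k - 1, hkm'⟩) ≤ t := key1 t ⟨k - 1, hkm'⟩ (by simp; omega)
      have h2 := hQ ⟨k - 1, hkm'⟩
      simp only [Fin.val_mk] at h2
      rw [show k - 1 + 1 = k from by omega] at h2
      have hQk : Q k ≤ t := by rw [h2]; exact hPk
      have hkS : k ∈ S := ⟨hkm, le_trans hQk htk⟩
      have hkR : k ≤ R := hRmax k hkS
      calc t ≤ α * k / m := htk
        _ ≤ α * R / m := by gcongr
  constructor
  · exact (IsGreatest.csSup_eq ⟨hτT, fun t ht => hub t ht⟩).symm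
  · intro hR1
    -- count at τ equals R
    have hle : (Finset.univ.filter (fun i => P i ≤ τ)).card ≤ R := by
      set k := (Finset.univ.filter (fun i => P i ≤ τ)).card with hk
      have hk1 : 1 ≤ k := le_trans hR1 hcτ
      have hkm : k ≤ m := le_trans (Finset.card_filter_le _ _) (by simp)
      have hkm' : k - 1 < m := by omega
      have hPk : P (σ ⟨k - 1, hkm'⟩) ≤ τ := key1 τ ⟨k - 1, hkm'⟩ (by simp; omega)
      have h2 := hQ ⟨k - 1, hkm'⟩
      simp only [Fin.val_mk] at h2
      rw [show k - 1 + 1 = k from by omega] at h2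
      have hQk : Q k ≤ τ := by rw [h2]; exact hPk
      have hτk : τ ≤ α * k / m := by
        rw [hτ]; gcongr
      exact hRmax k ⟨hkm, le_trans hQk hτk⟩
    have hceq : (Finset.univ.filter (fun i => P i ≤ τ)).card = R :=
      le_antisymm hle hcτ
    rw [hceq, hτα]
end

section
/- If P is uniform on [0,1] and f : [0,1] → (0,1] is a nonincreasing (left-continuous) function, then E[1{P ≤ f(P)} / f(P)] ≤ 1. -/
open MeasureTheory

/-- If `P` is uniform on [0,1] and `f : [0,1] → (0,1]` is nonincreasing and
left-continuous, then `E[1{P ≤ f(P)}/f(P)] ≤ 1` (expectation w.r.t. Lebesgue measure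
on [0,1]). -/
theorem uniform_superuniformity_integral (f : ℝ → ℝ)
    (hf : AntitoneOn f (Set.Icc (0 : ℝ) 1))
    (hfrange : ∀ p ∈ Set.Icc (0 : ℝ) 1, f p ∈ Set.Ioc (0 : ℝ) 1)
    (hlc : ∀ p ∈ Set.Ioc (0 : ℝ) 1,
      Filter.Tendsto f (nhdsWithin p (Set.Iio p)) (nhds (f p))) :
    ∫ p in Set.Icc (0 : ℝ) 1, (if p ≤ f p then 1 / f p else 0) ≤ 1 := by
  set S : Set ℝ := {p | p ∈ Set.Icc (0:ℝ) 1 ∧ p ≤ f p} with hSdef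
  have hf1 : f 1 ∈ Set.Ioc (0:ℝ) 1 := hfrange 1 (by norm_num)
  have hf1S : f 1 ∈ S := by
    refine ⟨⟨hf1.1.le, hf1.2⟩, hf ⟨hf1.1.le, hf1.2⟩ (by norm_num) hf1.2⟩
  have hne : S.Nonempty := ⟨f 1, hf1S⟩
  have hbdd : BddAbove S := ⟨1, fun p hp => hp.1.2⟩
  set q : ℝ := sSup S with hq
  have hq1 : q ≤ 1 := csSup_le hne fun p hp => hp.1.2
  have hqpos : 0 < q := lt_of_lt_of_le hf1.1 (le_csSup hbdd hf1S)
  have hqIcc : q ∈ Set.Icc (0:ℝ) 1 := ⟨hqpos.le, hq1⟩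
  have hbelow : ∀ p : ℝ, 0 ≤ p → p < q → p ≤ f p := by
    intro p hp0 hpq
    obtain ⟨r, hr, hpr⟩ := exists_lt_of_lt_csSup hne hpq
    have h1 : f r ≤ f p := hf ⟨hp0, le_trans hpr.le hr.1.2⟩ hr.1 hpr.le
    linarith [hr.2]
  have hfq : q ≤ f q := by
    have hlc' := hlc q ⟨hqpos, hq1⟩
    have hid : Filter.Tendsto (fun p : ℝ => p) (nhdsWithin q (Set.Iio q)) (nhds q) :=
      Filter.tendsto_id.mono_left nhdsWithin_le_nhds
    refine le_of_tendsto_of_tendsto hid hlc' ?_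
    filter_upwards [self_mem_nhdsWithin,
      nhdsWithin_le_nhds (Ioi_mem_nhds hqpos)] with p hp1 hp2
    exact hbelow p (le_of_lt hp2) hp1
  -- pointwise bound
  have key : ∀ p ∈ Set.Icc (0:ℝ) 1,
      (if p ≤ f p then 1 / f p else 0)
        ≤ Set.indicator (Set.Icc (0:ℝ) q) (fun _ => 1 / q) p := by
    intro p hp
    by_cases hpf : p ≤ f p
    · have hpS : p ∈ S := ⟨hp, hpf⟩
      have hpq : p ≤ q := le_csSup hbdd hpS
      have hmem : p ∈ Set.Icc (0:ℝ) q := ⟨hp.1, hpq⟩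
      rw [if_pos hpf, Set.indicator_of_mem hmem]
      have hfpq : f q ≤ f p := hf hp hqIcc hpq
      have : q ≤ f p := le_trans hfq hfpq
      exact one_div_le_one_div_of_le hqpos this
    · rw [if_neg hpf]
      exact Set.indicator_nonneg (fun x _ => by positivity) p
  have hsub : Set.Icc (0:ℝ) q ⊆ Set.Icc (0:ℝ) 1 :=
    Set.Icc_subset_Icc le_rfl hq1
  have hint : Integrable (Set.indicator (Set.Icc (0:ℝ) q) (fun _ => 1 / q))
      (volume.restrict (Set.Icc (0:ℝ) 1)) := by
    rw [integrable_indicator_iff measurableSet_Icc]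
    exact integrableOn_const (ne_of_lt (by
      rw [Measure.restrict_apply measurableSet_Icc]
      exact lt_of_le_of_lt (measure_mono Set.inter_subset_left)
        (by simp [Real.volume_Icc])))
  have h0 : 0 ≤ᵐ[volume.restrict (Set.Icc (0:ℝ) 1)]
      fun p => (if p ≤ f p then 1 / f p else 0) := by
    refine (ae_restrict_iff' measurableSet_Icc).2 (Filter.Eventually.of_forall ?_)
    intro p hp
    simp only [Pi.zero_apply]
    by_cases hpf : p ≤ f p
    · rw [if_pos hpf]
      have := (hfrange p hp).1
      positivity
    · rw [if_neg hpf]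
  have hle : (fun p => (if p ≤ f p then 1 / f p else 0))
      ≤ᵐ[volume.restrict (Set.Icc (0:ℝ) 1)]
      Set.indicator (Set.Icc (0:ℝ) q) (fun _ => 1 / q) := by
    exact (ae_restrict_iff' measurableSet_Icc).2 (Filter.Eventually.of_forall key)
  calc ∫ p in Set.Icc (0 : ℝ) 1, (if p ≤ f p then 1 / f p else 0)
      ≤ ∫ p in Set.Icc (0 : ℝ) 1,
          Set.indicator (Set.Icc (0:ℝ) q) (fun _ => 1 / q) p :=
        integral_mono_of_nonneg h0 hint hle
    _ = 1 := by
        rw [integral_indicator measurableSet_Icc, setIntegral_const, measureReal_def,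
          Measure.restrict_apply measurableSet_Icc,
          Set.inter_eq_left.2 hsub, Real.volume_Icc]
        rw [ENNReal.toReal_ofReal (by linarith)]
        rw [smul_eq_mul, sub_zero]
        field_simp
end

section
/- For independent uniform null p-values, the BH procedure with threshold τ_BH = sup{t : F(t) ≥ t/α} controls the FDR: E[V/(R ∨ 1)] ≤ (m₀/m)·α, where m₀ = |H0|, V is the number of nulls with P_j ≤ τ_BH, and R = m·F(τ_BH). -/
open MeasureTheory Finset

noncomputable def bhN {m : ℕ} (p : Fin m → ℝ) (t : ℝ) : ℕ :=
  (Finset.univ.filter (fun i => p i ≤ t)).card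

noncomputable def bhK (m : ℕ) (α : ℝ) (p : Fin m → ℝ) : ℕ :=
  Nat.findGreatest (fun k => k ≤ bhN p (α * k / m)) m

lemma bhN_mono {m : ℕ} (p : Fin m → ℝ) {t s : ℝ} (h : t ≤ s) : bhN p t ≤ bhN p s := by
  apply Finset.card_le_card
  intro i hi
  simp only [Finset.mem_filter] at *
  exact ⟨hi.1, le_trans hi.2 h⟩

lemma bhN_le {m : ℕ} (p : Fin m → ℝ) (t : ℝ) : bhN p t ≤ m := by
  simpa [bhN] using Finset.card_filter_le Finset.univ (fun i => p i ≤ t)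

lemma bhK_le {m : ℕ} {α : ℝ} {p : Fin m → ℝ} : bhK m α p ≤ m := Nat.findGreatest_le m

lemma bhK_spec {m : ℕ} {α : ℝ} {p : Fin m → ℝ} :
    bhK m α p ≤ bhN p (α * bhK m α p / m) :=
  Nat.findGreatest_spec (P := fun k => k ≤ bhN p (α * k / m)) (Nat.zero_le m) (Nat.zero_le _)

lemma le_bhK {m : ℕ} {α : ℝ} {p : Fin m → ℝ} {k : ℕ} (hk : k ≤ m)
    (h : k ≤ bhN p (α * k / m)) : k ≤ bhK m α p :=
  Nat.le_findGreatest hk h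

/-- The number of rejections at the BH threshold equals bhK. -/
lemma bhN_at_bhK {m : ℕ} {α : ℝ} (hα : 0 ≤ α) {p : Fin m → ℝ} :
    bhN p (α * bhK m α p / m) = bhK m α p := by
  set K := bhK m α p with hK
  refine le_antisymm ?_ bhK_spec
  set k' := bhN p (α * K / m) with hk'
  have h1 : K ≤ k' := bhK_spec
  have h2 : (α * K / m : ℝ) ≤ α * k' / m := by
    have h1' : (K : ℝ) ≤ k' := by exact_mod_cast h1
    gcongr
  have h3 : k' ≤ bhN p (α * k' / m) := hk' ▸ bhN_mono p h2
  exact le_bhK (hk' ▸ bhN_le p _) h3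

/-- `τ` from the theorem statement equals `α * bhK / m`. -/
lemma sSup_eq_bhK {m : ℕ} (hm : 1 ≤ m) {α : ℝ} (hα : 0 < α) (p : Fin m → ℝ) :
    sSup {t : ℝ | t ∈ Set.Icc (0 : ℝ) α ∧ ((bhN p t : ℝ)) / m ≥ t / α}
      = α * bhK m α p / m := by
  have hm' : (0 : ℝ) < m := by exact_mod_cast hm
  apply IsGreatest.csSup_eq
  constructor
  · refine ⟨⟨by positivity, ?_⟩, ?_⟩
    · rw [div_le_iff₀ hm']
      have : (bhK m α p : ℝ) ≤ m := by exact_mod_cast bhK_le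
      nlinarith
    · have : (α * (bhK m α p : ℝ) / m) / α = (bhK m α p : ℝ) / m := by
        field_simp
      rw [this]
      gcongr
      exact_mod_cast bhK_spec
  · rintro t ⟨⟨ht0, htα⟩, hF⟩
    set k := bhN p t with hk
    have hkm : k ≤ m := bhN_le p t
    have htk : t ≤ α * k / m := by
      rw [le_div_iff₀ hm']
      rw [ge_iff_le, div_le_div_iff₀ hα hm'] at hF
      linarith
    have : k ≤ bhN p (α * k / m) := hk ▸ bhN_mono p htk
    have hkK : k ≤ bhK m α p := le_bhK hkm this
    calc t ≤ α * k / m := htk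
      _ ≤ α * bhK m α p / m := by
          have : (k : ℝ) ≤ bhK m α p := by exact_mod_cast hkK
          gcongr

section LeaveOneOut

variable {m : ℕ} {α : ℝ} {p : Fin m → ℝ} {j : Fin m}

lemma bhN_update_ge {t : ℝ} (ht : 0 ≤ t) : bhN p t ≤ bhN (Function.update p j 0) t := by
  apply Finset.card_le_card
  intro i hi
  simp only [Finset.mem_filter, Finset.mem_univ, true_and] at *
  rcases eq_or_ne i j with rfl | h
  · simpa using ht
  · rwa [Function.update_of_ne h]

lemma bhK_le_bhK_update (hα : 0 ≤ α) : bhK m α p ≤ bhK m α (Function.update p j 0) := by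
  refine le_bhK bhK_le (le_trans bhK_spec (bhN_update_ge (by positivity)))

lemma one_le_bhK_update (hm : 1 ≤ m) (hα : 0 < α) : 1 ≤ bhK m α (Function.update p j 0) := by
  refine le_bhK hm ?_
  have : j ∈ Finset.univ.filter (fun i => Function.update p j 0 i ≤ α * (1:ℕ) / m) := by
    simp only [Finset.mem_filter, Finset.mem_univ, true_and, Function.update_self]
    positivity
  exact Finset.card_pos.mpr ⟨j, this⟩

/-- If `p j` is below the leave-one-out threshold, the thresholds agree. -/
lemma bhK_update_eq (hα : 0 ≤ α)
    (h : p j ≤ α * bhK m α (Function.update p j 0) / m) :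
    bhK m α p = bhK m α (Function.update p j 0) := by
  set K' := bhK m α (Function.update p j 0) with hK'
  refine le_antisymm (bhK_le_bhK_update hα) ?_
  have hfilt : Finset.univ.filter (fun i => Function.update p j 0 i ≤ α * K' / m)
      = Finset.univ.filter (fun i => p i ≤ α * K' / m) := by
    apply Finset.filter_congr
    intro i _
    rcases eq_or_ne i j with rfl | hne
    · simp only [Function.update_self]
      constructor
      · intro _; exact h
      · intro _; positivity
    · rw [Function.update_of_ne hne]
  have : bhN (Function.update p j 0) (α * K' / m) = bhN p (α * K' / m) := by
    simp only [bhN, hfilt]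
  exact le_bhK bhK_le (this ▸ bhK_spec)

/-- Key leave-one-out equivalence. -/
lemma bhK_update_iff (hα : 0 ≤ α) :
    p j ≤ α * bhK m α p / m ↔ p j ≤ α * bhK m α (Function.update p j 0) / m := by
  constructor
  · intro h
    refine le_trans h ?_
    have := bhK_le_bhK_update (p := p) (j := j) hα
    have : (bhK m α p : ℝ) ≤ bhK m α (Function.update p j 0) := by exact_mod_cast this
    rcases Nat.eq_zero_or_pos m with rfl | hm
    · exact Fin.elim0 j
    have hm' : (0 : ℝ) < m := by exact_mod_cast hm
    gcongr
  · intro h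
    rw [bhK_update_eq hα h]
    exact h

end LeaveOneOut

lemma measurable_bhN {m : ℕ} (t : ℝ) : Measurable (fun p : Fin m → ℝ => bhN p t) := by
  unfold bhN
  simp_rw [Finset.card_filter]
  apply Finset.measurable_sum
  intro i _
  exact Measurable.ite (measurableSet_le (measurable_pi_apply i) measurable_const)
    measurable_const measurable_const

lemma measurableSet_le_bhN {m : ℕ} (k : ℕ) (t : ℝ) :
    MeasurableSet {p : Fin m → ℝ | k ≤ bhN p t} :=
  measurable_bhN t (by trivial : MeasurableSet (Set.Ici k))

lemma measurable_bhK (m : ℕ) (α : ℝ) : Measurable (bhK m α) := by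
  apply measurable_to_countable'
  intro k
  have hset : bhK m α ⁻¹' {k} =
      ({p : Fin m → ℝ | k ≤ m} ∩ {p | k ≠ 0 → k ≤ bhN p (α * k / m)} ∩
        ⋂ n : ℕ, {p : Fin m → ℝ | k < n → n ≤ m → ¬ (n ≤ bhN p (α * n / m))}) := by
    ext p
    simp only [Set.mem_preimage, Set.mem_singleton_iff, bhK, Nat.findGreatest_eq_iff,
      Set.mem_inter_iff, Set.mem_iInter, Set.mem_setOf_eq]
    tauto
  rw [hset]
  refine MeasurableSet.inter (MeasurableSet.inter ?_ ?_) (MeasurableSet.iInter fun n => ?_)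
  · by_cases h : k ≤ m
    · simp only [h]; simp
    · simp only [h]; simp
  · by_cases h : k = 0
    · simp only [h]; simp
    · have : {p : Fin m → ℝ | k ≠ 0 → k ≤ bhN p (α * k / m)}
          = {p | k ≤ bhN p (α * k / m)} := by ext p; simp [h]
      rw [this]; exact measurableSet_le_bhN k _
  · by_cases h : k < n ∧ n ≤ m
    · have : {p : Fin m → ℝ | k < n → n ≤ m → ¬ (n ≤ bhN p (α * n / m))}
          = {p | n ≤ bhN p (α * n / m)}ᶜ := by ext p; simp [h.1, h.2]
      rw [this]; exact (measurableSet_le_bhN n _).compl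
    · have : {p : Fin m → ℝ | k < n → n ≤ m → ¬ (n ≤ bhN p (α * n / m))} = Set.univ := by
        ext p; simp only [Set.mem_setOf_eq, Set.mem_univ, iff_true]
        intro h1 h2; exact absurd ⟨h1, h2⟩ h
      rw [this]; exact MeasurableSet.univ

section Indep

open ProbabilityTheory

variable {Ω : Type*} [MeasurableSpace Ω] {μ : Measure Ω} {m : ℕ} {P : Fin m → Ω → ℝ}

/-- Extend a vector indexed by `{j}ᶜ` to a full vector, putting `0` at `j`. -/
noncomputable def bhExt {m : ℕ} (j : Fin m) (v : ({j}ᶜ : Finset (Fin m)) → ℝ) : Fin m → ℝ :=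
  fun i => if h : i = j then 0 else v ⟨i, by simp [h]⟩

lemma measurable_bhExt {m : ℕ} (j : Fin m) : Measurable (bhExt j) := by
  apply measurable_pi_lambda
  intro i
  unfold bhExt
  by_cases h : i = j
  · simp only [h, dif_pos]; exact measurable_const
  · simp only [h, dif_neg, not_false_iff]
    exact measurable_pi_apply _

lemma bhExt_eq_update (j : Fin m) (ω : Ω) :
    bhExt j (fun i : ({j}ᶜ : Finset (Fin m)) => P (i : Fin m) ω)
      = Function.update (fun i => P i ω) j 0 := by
  funext i
  unfold bhExt
  by_cases h : i = j
  · subst h; simp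
  · simp [h, Function.update_of_ne h]

lemma bh_indep_event (hμ : IsProbabilityMeasure μ)
    (hmeas : ∀ i, Measurable (P i))
    (hindep : iIndepFun P μ)
    (j : Fin m) (α : ℝ) (k : ℕ) (c : ℝ) :
    μ ({ω | bhK m α (Function.update (fun i => P i ω) j 0) = k} ∩ {ω | P j ω ≤ c})
      = μ {ω | bhK m α (Function.update (fun i => P i ω) j 0) = k} * μ {ω | P j ω ≤ c} := by
  have hdisj : Disjoint ({j}ᶜ : Finset (Fin m)) ({j} : Finset (Fin m)) :=
    disjoint_compl_left
  have hIF := hindep.indepFun_finset ({j}ᶜ : Finset (Fin m)) ({j} : Finset (Fin m)) hdisj hmeas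
  rw [ProbabilityTheory.indepFun_iff_measure_inter_preimage_eq_mul] at hIF
  have hjmem : j ∈ ({j} : Finset (Fin m)) := Finset.mem_singleton_self j
  set A : Set (({j}ᶜ : Finset (Fin m)) → ℝ) := (bhK m α ∘ bhExt j) ⁻¹' {k} with hA
  set B : Set (({j} : Finset (Fin m)) → ℝ) := {v | v ⟨j, hjmem⟩ ≤ c} with hB
  have hAm : MeasurableSet A := ((measurable_bhK m α).comp (measurable_bhExt j)) (by trivial)
  have hBm : MeasurableSet B := measurableSet_le (measurable_pi_apply _) measurable_const
  have h1 : (fun a (i : ({j}ᶜ : Finset (Fin m))) => P i a) ⁻¹' A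
      = {ω | bhK m α (Function.update (fun i => P i ω) j 0) = k} := by
    ext ω
    simp only [Set.mem_preimage, hA, Function.comp_apply, Set.mem_singleton_iff,
      Set.mem_setOf_eq, bhExt_eq_update]
  have h2 : (fun a (i : ({j} : Finset (Fin m))) => P i a) ⁻¹' B = {ω | P j ω ≤ c} := by
    ext ω
    simp only [Set.mem_preimage, hB, Set.mem_setOf_eq]
  have := hIF A B hAm hBm
  rw [h1, h2] at this
  exact this

end Indep

/-- BH FDR control: for independent p-values with uniform nulls, the BH procedure with
threshold `τ_BH = sup{t : F t ≥ t/α}` controls the FDR: `E[V/(R ∨ 1)] ≤ (m₀/m)·α`. -/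
theorem bh_fdr_control {Ω : Type*} [MeasurableSpace Ω] (μ : Measure Ω)
    [IsProbabilityMeasure μ] (m : ℕ) (hm : 1 ≤ m) (α : ℝ) (hα : α ∈ Set.Ioo (0 : ℝ) 1)
    (P : Fin m → Ω → ℝ) (hmeas : ∀ i, Measurable (P i))
    (hindep : ProbabilityTheory.iIndepFun P μ)
    (hrange : ∀ i ω, P i ω ∈ Set.Icc (0 : ℝ) 1)
    (H0 : Finset (Fin m))
    (hunif : ∀ j ∈ H0, ∀ t ∈ Set.Icc (0 : ℝ) 1, μ {ω | P j ω ≤ t} = ENNReal.ofReal t)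
    (τ : Ω → ℝ)
    (hτ : ∀ ω, τ ω = sSup {t : ℝ | t ∈ Set.Icc (0 : ℝ) α ∧
        ((Finset.univ.filter (fun i => P i ω ≤ t)).card : ℝ) / m ≥ t / α}) :
    ∫ ω, ((H0.filter (fun j => P j ω ≤ τ ω)).card : ℝ)
        / max ((Finset.univ.filter (fun i => P i ω ≤ τ ω)).card : ℝ) 1 ∂μ
      ≤ (H0.card : ℝ) / m * α := by
  obtain ⟨hα0, hα1⟩ := hα
  have hm' : (0 : ℝ) < m := by exact_mod_cast hm
  -- τ equals α * bhK / m
  have hτ' : ∀ ω, τ ω = α * bhK m α (fun i => P i ω) / m := by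
    intro ω
    rw [hτ ω]
    exact sSup_eq_bhK hm hα0 (fun i => P i ω)
  -- measurability of the leave-one-out rejection count
  have hKmeas : ∀ j : Fin m,
      Measurable (fun ω => bhK m α (Function.update (fun i => P i ω) j 0)) := by
    intro j
    have heq : (fun ω => bhK m α (Function.update (fun i => P i ω) j 0))
        = (bhK m α ∘ bhExt j) ∘ (fun ω (i : ({j}ᶜ : Finset (Fin m))) => P i ω) := by
      funext ω
      simp only [Function.comp_apply, bhExt_eq_update]
    rw [heq]
    exact ((measurable_bhK m α).comp (measurable_bhExt j)).comp
      (measurable_pi_lambda _ (fun i => hmeas i))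
  set A : Fin m → ℕ → Set Ω := fun j k =>
    {ω | bhK m α (Function.update (fun i => P i ω) j 0) = k} ∩ {ω | P j ω ≤ α * k / m}
    with hAdef
  have hAmeas : ∀ j k, MeasurableSet (A j k) := by
    intro j k
    exact ((hKmeas j) (by trivial : MeasurableSet {k})).inter
      (measurableSet_le (hmeas j) measurable_const)
  -- pointwise identity
  have key : ∀ ω, ((H0.filter (fun j => P j ω ≤ τ ω)).card : ℝ)
        / max ((Finset.univ.filter (fun i => P i ω ≤ τ ω)).card : ℝ) 1
      = ∑ j ∈ H0, ∑ k ∈ Finset.Icc 1 m, Set.indicator (A j k) (fun _ => (1:ℝ)/k) ω := by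
    intro ω
    rw [hτ' ω]
    set n := bhK m α (fun i => P i ω) with hn
    have hRn : (Finset.univ.filter (fun i => P i ω ≤ α * n / m)).card = n :=
      bhN_at_bhK hα0.le
    rcases Nat.eq_zero_or_pos n with hn0 | hn1
    · -- no rejections: both sides vanish
      have hV : (H0.filter (fun j => P j ω ≤ α * n / m)).card = 0 := by
        rw [Finset.card_eq_zero, Finset.filter_eq_empty_iff]
        intro j hj hPle
        rw [hn0] at hPle
        have h0 : P j ω ≤ 0 := by simpa using hPle
        have h1 : 1 ≤ bhN (fun i => P i ω) (α * (1:ℕ) / m) := by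
          refine Finset.card_pos.mpr ⟨j, ?_⟩
          simp only [Finset.mem_filter, Finset.mem_univ, true_and]
          calc P j ω ≤ 0 := h0
            _ ≤ α * (1:ℕ) / m := by positivity
        have := le_bhK hm h1
        omega
      rw [hV]
      simp only [Nat.cast_zero, zero_div]
      symm
      apply Finset.sum_eq_zero
      intro j hj
      apply Finset.sum_eq_zero
      intro k hk
      obtain ⟨hk1, hkm⟩ := Finset.mem_Icc.mp hk
      apply Set.indicator_of_notMem
      rintro ⟨hK, hP⟩
      simp only [Set.mem_setOf_eq] at hK hP
      have hP' : P j ω ≤ α * (bhK m α (Function.update (fun i => P i ω) j 0) : ℕ) / m := by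
        rw [hK]; exact hP
      have heq := bhK_update_eq (p := fun i => P i ω) (j := j) hα0.le hP'
      rw [hK] at heq
      omega
    · -- at least one rejection
      have hmax : max ((Finset.univ.filter (fun i => P i ω ≤ α * n / m)).card : ℝ) 1
          = (n : ℝ) := by
        rw [hRn]
        exact max_eq_left (by exact_mod_cast hn1)
      have inner : ∀ j, (∑ k ∈ Finset.Icc 1 m, Set.indicator (A j k) (fun _ => (1:ℝ)/k) ω)
          = if P j ω ≤ α * n / m then 1/(n:ℝ) else 0 := by
        intro j
        by_cases h : P j ω ≤ α * n / m
        · have hiff : P j ω ≤ α * (bhK m α (Function.update (fun i => P i ω) j 0) : ℕ) / m :=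
            (bhK_update_iff (p := fun i => P i ω) (j := j) hα0.le).mp h
          have heq : n = bhK m α (Function.update (fun i => P i ω) j 0) :=
            bhK_update_eq (p := fun i => P i ω) (j := j) hα0.le hiff
          rw [if_pos h]
          rw [Finset.sum_eq_single n]
          · exact Set.indicator_of_mem (show ω ∈ A j n from ⟨heq.symm, h⟩) _
          · intro b hb hbn
            apply Set.indicator_of_notMem
            rintro ⟨hK, -⟩
            simp only [Set.mem_setOf_eq] at hK
            exact hbn (hK.symm.trans heq.symm)
          · intro hnot
            exact absurd (Finset.mem_Icc.mpr ⟨hn1, bhK_le⟩) hnot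
        · rw [if_neg h]
          apply Finset.sum_eq_zero
          intro k hk
          apply Set.indicator_of_notMem
          rintro ⟨hK, hP⟩
          simp only [Set.mem_setOf_eq] at hK hP
          apply h
          have hP' : P j ω ≤ α * (bhK m α (Function.update (fun i => P i ω) j 0) : ℕ) / m := by
            rw [hK]; exact hP
          exact (bhK_update_iff (p := fun i => P i ω) (j := j) hα0.le).mpr hP'
      rw [Finset.sum_congr rfl (fun j _ => inner j), hmax]
      rw [Finset.sum_ite, Finset.sum_const, Finset.sum_const_zero, add_zero, nsmul_eq_mul,
        mul_one_div]
  rw [integral_congr_ae (Filter.Eventually.of_forall key)]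
  have hint : ∀ j k, Integrable (Set.indicator (A j k) (fun _ => (1:ℝ)/k)) μ :=
    fun j k => (integrable_const _).indicator (hAmeas j k)
  rw [integral_finset_sum _ (fun j _ => integrable_finset_sum _ (fun k _ => hint j k))]
  -- compute each inner integral
  have hsum : ∀ j ∈ H0, ∫ ω, (∑ k ∈ Finset.Icc 1 m,
        Set.indicator (A j k) (fun _ => (1:ℝ)/k) ω) ∂μ ≤ α / m := by
    intro j hj
    rw [integral_finset_sum _ (fun k _ => hint j k)]
    have hterm : ∀ k ∈ Finset.Icc 1 m,
        ∫ ω, Set.indicator (A j k) (fun _ => (1:ℝ)/k) ω ∂μ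
          = (μ {ω | bhK m α (Function.update (fun i => P i ω) j 0) = k}).toReal * (α / m) := by
      intro k hk
      obtain ⟨hk1, hkm⟩ := Finset.mem_Icc.mp hk
      have hk0 : (0:ℝ) < k := by exact_mod_cast hk1
      have hμA : μ (A j k) = μ {ω | bhK m α (Function.update (fun i => P i ω) j 0) = k}
          * ENNReal.ofReal (α * k / m) := by
        rw [hAdef]
        rw [bh_indep_event inferInstance hmeas hindep j α k (α * k / m)]
        congr 1
        apply hunif j hj
        constructor
        · positivity
        · rw [div_le_one hm']
          have hkm' : (k:ℝ) ≤ m := by exact_mod_cast hkm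
          nlinarith
      rw [integral_indicator_const _ (hAmeas j k), measureReal_def, hμA, smul_eq_mul,
        ENNReal.toReal_mul, ENNReal.toReal_ofReal (by positivity)]
      have : α * k / m * (1/k) = α / m := by field_simp
      rw [mul_assoc, this]
    rw [Finset.sum_congr rfl hterm, ← Finset.sum_mul]
    have hdisj : Set.PairwiseDisjoint (↑(Finset.Icc 1 m)) (fun k =>
        {ω | bhK m α (Function.update (fun i => P i ω) j 0) = k}) := by
      intro a _ b _ hab
      apply Set.disjoint_left.mpr
      intro ω ha hb
      exact hab (ha.symm.trans hb)
    have hsum1 : ∑ k ∈ Finset.Icc 1 m,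
        (μ {ω | bhK m α (Function.update (fun i => P i ω) j 0) = k}).toReal ≤ 1 := by
      have h1 : ∑ k ∈ Finset.Icc 1 m,
          μ {ω | bhK m α (Function.update (fun i => P i ω) j 0) = k} ≤ 1 := by
        rw [← measure_biUnion_finset hdisj (fun k _ =>
          (show MeasurableSet {ω | bhK m α (Function.update (fun i => P i ω) j 0) = k} from
            (hKmeas j) (by trivial : MeasurableSet {n : ℕ | n = k})))]
        exact prob_le_one
      calc ∑ k ∈ Finset.Icc 1 m,
            (μ {ω | bhK m α (Function.update (fun i => P i ω) j 0) = k}).toReal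
          = (∑ k ∈ Finset.Icc 1 m,
            μ {ω | bhK m α (Function.update (fun i => P i ω) j 0) = k}).toReal := by
            rw [ENNReal.toReal_sum (fun k _ => measure_ne_top μ _)]
        _ ≤ 1 := by
            rw [← ENNReal.toReal_one]
            exact ENNReal.toReal_mono (by simp) h1
    calc (∑ k ∈ Finset.Icc 1 m,
          (μ {ω | bhK m α (Function.update (fun i => P i ω) j 0) = k}).toReal) * (α / m)
        ≤ 1 * (α / m) := by
          apply mul_le_mul_of_nonneg_right hsum1 (by positivity)
      _ = α / m := one_mul _
  calc ∑ j ∈ H0, ∫ ω, (∑ k ∈ Finset.Icc 1 m,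
        Set.indicator (A j k) (fun _ => (1:ℝ)/k) ω) ∂μ
      ≤ ∑ j ∈ H0, α / m := Finset.sum_le_sum hsum
    _ = H0.card * (α / m) := by rw [Finset.sum_const, nsmul_eq_mul]
    _ = (H0.card : ℝ) / m * α := by ring
end
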